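/- Let (X,d) be a possibly non-symmetric metric space with base-point b. Define the detour metric δ(ξ,η) := H(ξ,η) + H(η,ξ) on the set of Busemann points (horofunctions ξ with H(ξ,ξ) = 0). Then δ is a possibly infinity-valued metric: δ is symmetric, δ(ξ,ξ) = 0, δ satisfies the triangle inequality, and δ(ξ,η) = 0 implies ξ = η. -/

import Mathlib

open Filter

/-- The detour cost `H(ξ,η)`, valued in `EReal`. -/
noncomputable def detourCost {X : Type*} (d : X → X → ℝ) (b : X) (ξ η : X → ℝ) : EReal :=
  sInf { c : EReal | ∃ z : ℕ → X,
    (∀ x, Filter.Tendsto (fun n => d x (z n) - d b (z n)) Filter.atTop (nhds (ξ x))) ∧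
    c = Filter.liminf (fun n => ((d b (z n) + η (z n) : ℝ) : EReal)) Filter.atTop }

/-- The detour metric `δ(ξ,η) = H(ξ,η) + H(η,ξ)`. -/
noncomputable def detourMetric {X : Type*} (d : X → X → ℝ) (b : X) (ξ η : X → ℝ) : EReal :=
  detourCost d b ξ η + detourCost d b η ξ

section Aux

variable {X : Type*} {d : X → X → ℝ} {b : X}

/-- Every horofunction is bounded below by `-d(b,·)`. -/
private lemma horo_lb (htri : ∀ x y z, d x z ≤ d x y + d y z) {η : X → ℝ}
    (hη : ∃ z : ℕ → X,
      ∀ x, Tendsto (fun n => d x (z n) - d b (z n)) atTop (nhds (η x))) (x : X) :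
    -(d b x) ≤ η x := by
  obtain ⟨w, hw⟩ := hη
  refine ge_of_tendsto (hw x) (Eventually.of_forall fun n => ?_)
  have := htri b x (w n); linarith

/-- Horofunctions are 1-Lipschitz: `η x ≤ d x y + η y`. -/
private lemma horo_tri (htri : ∀ x y z, d x z ≤ d x y + d y z) {η : X → ℝ}
    (hη : ∃ z : ℕ → X,
      ∀ x, Tendsto (fun n => d x (z n) - d b (z n)) atTop (nhds (η x))) (x y : X) :
    η x ≤ d x y + η y := by
  obtain ⟨w, hw⟩ := hη
  have h2 : Tendsto (fun n => d x y + (d y (w n) - d b (w n))) atTop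
      (nhds (d x y + η y)) := tendsto_const_nhds.add (hw y)
  refine le_of_tendsto_of_tendsto' (hw x) h2 fun n => ?_
  have := htri x y (w n); linarith

private lemma detourCost_nonneg (htri : ∀ x y z, d x z ≤ d x y + d y z) {ξ η : X → ℝ}
    (hη : ∃ z : ℕ → X,
      ∀ x, Tendsto (fun n => d x (z n) - d b (z n)) atTop (nhds (η x))) :
    0 ≤ detourCost d b ξ η := by
  refine le_sInf ?_
  rintro c ⟨z, hz, rfl⟩
  refine le_liminf_of_le (by isBoundedDefault) (Eventually.of_forall fun n => ?_)
  have h := horo_lb htri hη (z n)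
  exact_mod_cast (by linarith : (0:ℝ) ≤ d b (z n) + η (z n))

/-- Key inequality: `η x ≤ ξ x + H(ξ,η)`. -/
private lemma key_ineq (htri : ∀ x y z, d x z ≤ d x y + d y z) {ξ η : X → ℝ}
    (hη : ∃ z : ℕ → X,
      ∀ x, Tendsto (fun n => d x (z n) - d b (z n)) atTop (nhds (η x))) (x : X) :
    (η x : EReal) ≤ (ξ x : EReal) + detourCost d b ξ η := by
  have h : ((η x - ξ x : ℝ) : EReal) ≤ detourCost d b ξ η := by
    refine le_sInf ?_
    rintro c ⟨z, hz, rfl⟩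
    have hten : Tendsto (fun n => ((η x - (d x (z n) - d b (z n)) : ℝ) : EReal)) atTop
        (nhds ((η x - ξ x : ℝ) : EReal)) :=
      (continuous_coe_real_ereal.tendsto _).comp (tendsto_const_nhds.sub (hz x))
    rw [← hten.liminf_eq]
    refine liminf_le_liminf (Eventually.of_forall fun n => ?_)
    have h1 := horo_tri htri hη x (z n)
    exact_mod_cast (by linarith : η x - (d x (z n) - d b (z n)) ≤ d b (z n) + η (z n))
  calc (η x : EReal) = ((ξ x + (η x - ξ x) : ℝ) : EReal) := by norm_num
    _ = (ξ x : EReal) + ((η x - ξ x : ℝ) : EReal) := EReal.coe_add _ _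
    _ ≤ (ξ x : EReal) + detourCost d b ξ η := add_le_add_right h _

/-- Triangle inequality for the detour cost. -/
private lemma detourCost_triangle (htri : ∀ x y z, d x z ≤ d x y + d y z) {ξ η ν : X → ℝ}
    (hη : ∃ z : ℕ → X,
      ∀ x, Tendsto (fun n => d x (z n) - d b (z n)) atTop (nhds (η x)))
    (hν : ∃ z : ℕ → X,
      ∀ x, Tendsto (fun n => d x (z n) - d b (z n)) atTop (nhds (ν x))) :
    detourCost d b ξ ν ≤ detourCost d b ξ η + detourCost d b η ν := by
  rcases eq_or_ne (detourCost d b η ν) ⊤ with hK | hK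
  · rw [hK, EReal.add_top_of_ne_bot
      (ne_bot_of_le_ne_bot (by simp) (detourCost_nonneg htri hη))]
    exact le_top
  · have hKbot : detourCost d b η ν ≠ ⊥ :=
      ne_bot_of_le_ne_bot (by simp) (detourCost_nonneg htri hν)
    lift (detourCost d b η ν) to ℝ using ⟨hK, hKbot⟩ with k hk
    have hkey : ∀ y, ν y ≤ η y + k := by
      intro y
      have h := key_ineq (ξ := η) htri hν y
      rw [← hk] at h
      exact_mod_cast h
    rw [← EReal.sub_le_iff_le_add (b := (k : EReal)) (.inl (by simp)) (.inl (by simp))]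
    show _ ≤ sInf _
    refine le_sInf ?_
    rintro c ⟨z, hz, rfl⟩
    rw [EReal.sub_le_iff_le_add (.inl (by simp)) (.inl (by simp))]
    have step1 : detourCost d b ξ ν ≤
        liminf (fun n => ((d b (z n) + ν (z n) : ℝ) : EReal)) atTop :=
      sInf_le ⟨z, hz, rfl⟩
    have step2 : liminf (fun n => ((d b (z n) + ν (z n) : ℝ) : EReal)) atTop ≤
        liminf ((fun _ : ℕ => (k : EReal)) +
          fun n => ((d b (z n) + η (z n) : ℝ) : EReal)) atTop := by
      refine liminf_le_liminf (Eventually.of_forall fun n => ?_)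
      have := hkey (z n)
      show ((d b (z n) + ν (z n) : ℝ) : EReal) ≤ (k : EReal) + ((d b (z n) + η (z n) : ℝ) : EReal)
      rw [← EReal.coe_add]
      exact_mod_cast (by linarith : d b (z n) + ν (z n) ≤ k + (d b (z n) + η (z n)))
    have step3 : liminf ((fun _ : ℕ => (k : EReal)) +
          fun n => ((d b (z n) + η (z n) : ℝ) : EReal)) atTop ≤
        limsup (fun _ : ℕ => (k : EReal)) atTop +
          liminf (fun n => ((d b (z n) + η (z n) : ℝ) : EReal)) atTop :=
      EReal.liminf_add_le (by rw [limsup_const]; simp) (by rw [limsup_const]; simp)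
    rw [limsup_const] at step3
    calc detourCost d b ξ ν ≤ _ := step1
      _ ≤ _ := step2
      _ ≤ _ := step3
      _ = liminf (fun n => ((d b (z n) + η (z n) : ℝ) : EReal)) atTop + (k : EReal) :=
        add_comm _ _

end Aux

theorem detourMetric_is_metric {X : Type*} (d : X → X → ℝ) (b : X)
    (hpos : ∀ x y, 0 ≤ d x y) (hzero : ∀ x y, d x y = 0 ↔ x = y)
    (htri : ∀ x y z, d x z ≤ d x y + d y z)
    (ξ η ν : X → ℝ)
    (hξ : ∃ z : ℕ → X,
      ∀ x, Filter.Tendsto (fun n => d x (z n) - d b (z n)) Filter.atTop (nhds (ξ x)))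
    (hη : ∃ z : ℕ → X,
      ∀ x, Filter.Tendsto (fun n => d x (z n) - d b (z n)) Filter.atTop (nhds (η x)))
    (hν : ∃ z : ℕ → X,
      ∀ x, Filter.Tendsto (fun n => d x (z n) - d b (z n)) Filter.atTop (nhds (ν x)))
    (hξB : detourCost d b ξ ξ = 0) (hηB : detourCost d b η η = 0)
    (hνB : detourCost d b ν ν = 0) :
    detourMetric d b ξ η = detourMetric d b η ξ ∧
    detourMetric d b ξ ξ = 0 ∧
    detourMetric d b ξ ν ≤ detourMetric d b ξ η + detourMetric d b η ν ∧
    (detourMetric d b ξ η = 0 → ξ = η) := by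
  refine ⟨add_comm _ _, by rw [detourMetric, hξB, add_zero], ?_, ?_⟩
  · have h1 := detourCost_triangle (ξ := ξ) htri hη hν
    have h2 := detourCost_triangle (ξ := ν) (ν := ξ) htri hη hξ
    calc detourMetric d b ξ ν ≤
        (detourCost d b ξ η + detourCost d b η ν) +
          (detourCost d b ν η + detourCost d b η ξ) := add_le_add h1 h2
      _ = detourMetric d b ξ η + detourMetric d b η ν := by
        simp only [detourMetric]; abel
  · intro h0
    have hab : detourCost d b ξ η = 0 ∧ detourCost d b η ξ = 0 := by
      have ha := detourCost_nonneg (ξ := ξ) htri hη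
      have hb := detourCost_nonneg (ξ := η) htri hξ
      constructor
      · refine le_antisymm ?_ ha
        calc detourCost d b ξ η = detourCost d b ξ η + 0 := (add_zero _).symm
          _ ≤ detourCost d b ξ η + detourCost d b η ξ := add_le_add_right hb _
          _ = 0 := h0
      · refine le_antisymm ?_ hb
        calc detourCost d b η ξ = 0 + detourCost d b η ξ := (zero_add _).symm
          _ ≤ detourCost d b ξ η + detourCost d b η ξ := add_le_add_left ha _
          _ = 0 := h0
    funext x
    have k1 := key_ineq (ξ := ξ) htri hη x
    have k2 := key_ineq (ξ := η) htri hξ x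
    rw [hab.1, add_zero] at k1
    rw [hab.2, add_zero] at k2
    exact le_antisymm (by exact_mod_cast k2) (by exact_mod_cast k1)
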